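/- Let U be a finite-dimensional complex vector space with symplectic form σ, λ: ℂ× → Sp(U,σ) a homomorphism with weight decomposition U = U_{e_0} ⊕ ... ⊕ U_{e_s}, e_0 > ... > e_s, and L_i := U_{e_0} ⊕ ... ⊕ U_{e_i}. If A ⊂ U is a Lagrangian subspace and d_i(A) := dim(A∩L_i / A∩L_{i-1}), then d_i(A) + d_{s-i}(A) = dim U_{e_i} for all 0 ≤ i ≤ s. -/

import Mathlib

set_option maxHeartbeats 1000000

open Module Submodule

lemma stmt1_aux_ineq {U : Type*} [AddCommGroup U] [Module ℂ U] [FiniteDimensional ℂ U]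
    (B : LinearMap.BilinForm ℂ U) (hRefl : B.IsRefl) (hNd : B.Nondegenerate)
    (A L : Submodule ℂ U) (hIso : ∀ x ∈ A, ∀ y ∈ A, B x y = 0) :
    finrank ℂ ↥(A ⊓ L) + finrank ℂ A + finrank ℂ ↥(B.orthogonal L)
      ≤ finrank ℂ U + finrank ℂ ↥(A ⊓ B.orthogonal L) := by
  have h1 : A ⊔ B.orthogonal L ≤ B.orthogonal (A ⊓ L) := by
    apply sup_le
    · intro a ha x hx
      exact hIso x hx.1 a ha
    · exact B.orthogonal_le inf_le_right
  have h2 := Submodule.finrank_sup_add_finrank_inf_eq A (B.orthogonal L)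
  have h3 : finrank ℂ ↥(A ⊔ B.orthogonal L) ≤ finrank ℂ ↥(B.orthogonal (A ⊓ L)) :=
    Submodule.finrank_mono h1
  have h4 := LinearMap.BilinForm.finrank_orthogonal hNd (A ⊓ L)
  have h5 : finrank ℂ ↥(A ⊓ L) ≤ finrank ℂ U := (A ⊓ L).finrank_le
  omega

lemma stmt1_biSup_le {M : Type*} [AddCommGroup M] [Module ℂ M] {ι : Type*} {W : ι → Submodule ℂ M}
    {p : ι → Prop} {T : Submodule ℂ M} (h : ∀ j, p j → W j ≤ T) :
    (⨆ j, ⨆ _ : p j, W j) ≤ T := by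
  apply iSup_le; intro j; apply iSup_le; intro hj; exact h j hj

lemma stmt1_le_biSup {M : Type*} [AddCommGroup M] [Module ℂ M] {ι : Type*} (W : ι → Submodule ℂ M)
    {p : ι → Prop} (j : ι) (hj : p j) : W j ≤ ⨆ j, ⨆ _ : p j, W j :=
  le_iSup_of_le j (le_iSup_of_le hj le_rfl)

/-- Let `U` be a finite-dimensional complex symplectic vector space, `λ : ℂˣ → Sp(U,σ)` a
homomorphism with weight decomposition `U = U_{e₀} ⊕ ⋯ ⊕ U_{eₛ}`, `e₀ > ⋯ > eₛ`, and
`Lᵢ := U_{e₀} ⊕ ⋯ ⊕ U_{eᵢ}`. If `A ⊂ U` is Lagrangian and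
`dᵢ(A) := dim (A ∩ Lᵢ / A ∩ L_{i-1})`, then `dᵢ(A) + d_{s-i}(A) = dim U_{eᵢ}` for all
`0 ≤ i ≤ s`. -/
theorem stmt_1 (U : Type*) [AddCommGroup U] [Module ℂ U] [FiniteDimensional ℂ U]
    (σ : U →ₗ[ℂ] U →ₗ[ℂ] ℂ)
    (hAlt : ∀ x : U, σ x x = 0)
    (hNondeg : ∀ x : U, (∀ y : U, σ x y = 0) → x = 0)
    (s : ℕ) (e : Fin (s + 1) → ℤ) (hdec : StrictAnti e)
    (W : Fin (s + 1) → Submodule ℂ U)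
    (hne : ∀ i, W i ≠ ⊥)
    (hInt : DirectSum.IsInternal W)
    (lam : ℂˣ →* (U ≃ₗ[ℂ] U))
    (hSp : ∀ (t : ℂˣ) (x y : U), σ (lam t x) (lam t y) = σ x y)
    (hwt : ∀ (t : ℂˣ) (i : Fin (s + 1)), ∀ x ∈ W i, lam t x = ((t : ℂ) ^ (e i)) • x)
    (A : Submodule ℂ U)
    (hIsoA : ∀ x ∈ A, ∀ y ∈ A, σ x y = 0)
    (hLagr : 2 * Module.finrank ℂ A = Module.finrank ℂ U)
    (L : Fin (s + 1) → Submodule ℂ U)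
    (hL : ∀ i, L i = ⨆ j ≤ i, W j)
    (d : Fin (s + 1) → ℕ)
    (hd : ∀ i, d i = Module.finrank ℂ ↥(A ⊓ L i)
      - Module.finrank ℂ ↥(A ⊓ ⨆ j < i, W j)) :
    ∀ i : Fin (s + 1), d i + d i.rev = Module.finrank ℂ (W i) := by
  classical
  set B : LinearMap.BilinForm ℂ U := σ with hB
  have hRefl : B.IsRefl := LinearMap.IsAlt.isRefl hAlt
  have hNd : B.Nondegenerate := (LinearMap.IsRefl.nondegenerate_iff_separatingLeft hRefl).2 hNondeg
  -- the unit 2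
  set t : ℂˣ := Units.mk0 (2 : ℂ) two_ne_zero with ht
  have ht2 : ∀ m : ℤ, (t : ℂ) ^ m = 1 → m = 0 := by
    intro m hm
    have habs : ((2 : ℝ) ^ m) = 1 := by
      have := congrArg (‖·‖) hm
      simpa [ht, norm_zpow] using this
    have : StrictMono fun n : ℤ => (2 : ℝ) ^ n := zpow_right_strictMono₀ (by norm_num)
    have := this.injective (a₁ := m) (a₂ := 0) (by simpa using habs)
    exact this
  -- orthogonality of weight spaces with non-opposite weights
  have horth : ∀ i j : Fin (s + 1), e i + e j ≠ 0 →
      ∀ x ∈ W i, ∀ y ∈ W j, σ x y = 0 := by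
    intro i j hij x hx y hy
    have h := hSp t x y
    rw [hwt t i x hx, hwt t j y hy] at h
    simp only [map_smul, LinearMap.smul_apply, smul_eq_mul] at h
    have h' : ((t : ℂ) ^ (e i + e j) - 1) * σ x y = 0 := by
      rw [zpow_add₀ (Units.ne_zero t)]; ring_nf; linear_combination h
    rcases mul_eq_zero.1 h' with h'' | h''
    · exact absurd (ht2 _ (sub_eq_zero.1 h'')) hij
    · exact h''
  -- every weight has an opposite
  have hpair : ∀ i : Fin (s + 1), ∃ j, e j = -e i := by
    intro i
    by_contra hcon
    push_neg at hcon
    obtain ⟨x, hx, hx0⟩ := Submodule.exists_mem_ne_zero_of_ne_bot (hne i)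
    apply hx0
    apply hNondeg
    intro y
    have hy : y ∈ ⨆ j, W j := by rw [hInt.submodule_iSup_eq_top]; trivial
    refine Submodule.iSup_induction (motive := fun z => σ x z = 0) W hy ?_ (by simp) ?_
    · intro j z hz
      exact horth i j (fun h0 => hcon j (by linarith)) x hx z hz
    · intro a b ha hb; simp [ha, hb]
  -- `e` of the reversed index is the opposite weight
  choose g hg using hpair
  have hganti : StrictAnti g := by
    intro a b hab
    have h1 : e (g a) < e (g b) := by
      rw [hg, hg]
      have := hdec hab
      omega
    exact (hdec.lt_iff_gt).1 h1
  have key : ∀ (f : Fin (s + 1) → Fin (s + 1)), StrictMono f → ∀ i, i ≤ f i := by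
    intro f hf i
    obtain ⟨m, hm⟩ : ∃ m : ℕ, (i : ℕ) ≤ m := ⟨i, le_rfl⟩
    induction m generalizing i with
    | zero => exact Fin.le_def.2 (by omega)
    | succ m ih =>
      by_contra h
      push_neg at h
      have h1 : f i ≤ f (f i) := ih (f i) (by have := Fin.lt_def.1 h; omega)
      exact absurd h1 (not_le.2 (hf h))
  have hgrev : ∀ i : Fin (s + 1), g i = i.rev := by
    have m1 : StrictMono fun i : Fin (s + 1) => (g i).rev :=
      fun a b hab => Fin.rev_lt_rev.2 (hganti hab)
    have m2 : StrictMono fun i : Fin (s + 1) => g i.rev :=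
      fun a b hab => hganti (Fin.rev_lt_rev.2 hab)
    intro i
    have h1 : i ≤ (g i).rev := key _ m1 i
    have h2 : i.rev ≤ g i.rev.rev := key _ m2 i.rev
    rw [Fin.rev_rev] at h2
    have h1' : g i ≤ i.rev := by
      have := Fin.rev_le_rev.2 h1
      rwa [Fin.rev_rev] at this
    exact le_antisymm h1' h2
  have hrev : ∀ i : Fin (s + 1), e i.rev = - e i := fun i => by rw [← hgrev i]; exact hg i
  -- the partial sums of the weight decomposition
  obtain ⟨P, hP⟩ : ∃ P : ℕ → Submodule ℂ U,
      ∀ k, P k = ⨆ j : Fin (s + 1), ⨆ _ : (j : ℕ) < k, W j := ⟨_, fun _ => rfl⟩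
  have hPmono : Monotone P := by
    intro a b hab
    rw [hP a, hP b]
    exact stmt1_biSup_le fun j hj => stmt1_le_biSup W j (lt_of_lt_of_le hj hab)
  have hP0 : P 0 = ⊥ := by
    rw [hP]; simp
  have hPtop : P (s + 1) = ⊤ := by
    rw [hP, ← hInt.submodule_iSup_eq_top]
    exact le_antisymm (stmt1_biSup_le fun j _ => le_iSup W j)
      (iSup_le fun j => stmt1_le_biSup W j j.isLt)
  have hLP : ∀ i : Fin (s + 1), L i = P ((i : ℕ) + 1) := by
    intro i
    rw [hL i, hP]
    apply le_antisymm
    · exact stmt1_biSup_le fun j hj => stmt1_le_biSup W j (Nat.lt_succ_of_le (Fin.le_def.1 hj))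
    · exact stmt1_biSup_le fun j hj => stmt1_le_biSup W j (Fin.le_def.2 (Nat.le_of_lt_succ hj))
  have hMP : ∀ i : Fin (s + 1), (⨆ j < i, W j) = P (i : ℕ) := by
    intro i
    rw [hP]
    apply le_antisymm
    · exact stmt1_biSup_le fun j hj => stmt1_le_biSup W j (Fin.lt_def.1 hj)
    · exact stmt1_biSup_le fun j hj => stmt1_le_biSup W j (Fin.lt_def.2 hj)
  have hsplit : ∀ (k : ℕ) (hk : k < s + 1), P (k + 1) = P k ⊔ W ⟨k, hk⟩ := by
    intro k hk
    rw [hP (k + 1), hP k]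
    apply le_antisymm
    · apply stmt1_biSup_le
      intro j hj
      rcases lt_or_eq_of_le (Nat.le_of_lt_succ hj) with h | h
      · exact le_sup_of_le_left (stmt1_le_biSup W j h)
      · have : j = ⟨k, hk⟩ := Fin.ext h
        rw [this]; exact le_sup_right
    · exact sup_le (stmt1_biSup_le fun j hj => stmt1_le_biSup W j (by omega))
        (stmt1_le_biSup W ⟨k, hk⟩ (Nat.lt_succ_self k))
  have hdisj : ∀ (k : ℕ) (hk : k < s + 1), Disjoint (W ⟨k, hk⟩) (P k) := by
    intro k hk
    refine (hInt.submodule_iSupIndep ⟨k, hk⟩).mono_right ?_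
    rw [hP]
    exact stmt1_biSup_le fun j hj => stmt1_le_biSup W j (Fin.ne_of_val_ne (by omega : (j:ℕ) ≠ k))
  have hPdimStep : ∀ (k : ℕ) (hk : k < s + 1),
      finrank ℂ (P (k + 1)) = finrank ℂ (P k) + finrank ℂ (W ⟨k, hk⟩) := by
    intro k hk
    have h := Submodule.finrank_sup_add_finrank_inf_eq (P k) (W ⟨k, hk⟩)
    rw [disjoint_iff.1 (hdisj k hk).symm] at h
    rw [hsplit k hk]
    simp only [finrank_bot] at h
    omega
  -- dimension pairing of opposite weight spaces
  have hWle : ∀ i : Fin (s + 1), finrank ℂ (W i) ≤ finrank ℂ (W i.rev) := by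
    intro i
    set φ : W i →ₗ[ℂ] Module.Dual ℂ (W i.rev) :=
      (B.compl₂ (W i.rev).subtype).comp (W i).subtype with hφ
    have hinj : Function.Injective φ := by
      rw [← LinearMap.ker_eq_bot, LinearMap.ker_eq_bot']
      intro x hx0
      have hx0' : ∀ y ∈ W i.rev, σ (x : U) y = 0 := by
        intro y hy
        have := congrArg (fun f => f ⟨y, hy⟩) hx0
        simpa [hφ] using this
      have : (x : U) = 0 := by
        apply hNondeg
        intro y
        have hy : y ∈ ⨆ j, W j := by rw [hInt.submodule_iSup_eq_top]; trivial
        refine Submodule.iSup_induction (motive := fun z => σ (x : U) z = 0) W hy ?_ (by simp) ?_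
        · intro j z hz
          by_cases hj : j = i.rev
          · exact hx0' z (hj ▸ hz)
          · refine horth i j ?_ (x : U) x.2 z hz
            intro h0
            have he : e j = e i.rev := by rw [hrev]; omega
            exact hj (hdec.injective he)
        · intro a b ha hb; simp [ha, hb]
      exact Subtype.ext this
    calc finrank ℂ (W i) ≤ finrank ℂ (Module.Dual ℂ (W i.rev)) :=
          LinearMap.finrank_le_finrank_of_injective hinj
      _ = finrank ℂ (W i.rev) := Subspace.dual_finrank_eq
  have hWeq : ∀ i : Fin (s + 1), finrank ℂ (W i.rev) = finrank ℂ (W i) :=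
    fun i => le_antisymm (by have := hWle i.rev; rwa [Fin.rev_rev] at this) (hWle i)
  -- pairing of partial sums dimensions
  have hPpair : ∀ k : ℕ, k ≤ s + 1 →
      finrank ℂ (P k) + finrank ℂ (P (s + 1 - k)) = finrank ℂ U := by
    intro k
    induction k with
    | zero => intro _; rw [Nat.sub_zero, hP0, hPtop, finrank_bot, finrank_top]; omega
    | succ k ih =>
      intro hk1
      have hk : k < s + 1 := hk1
      have h1 := hPdimStep k hk
      have hks : s - k < s + 1 := by omega
      have h2 := hPdimStep (s - k) hks
      have h3 : s + 1 - k = (s - k) + 1 := by omega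
      have h4 : s + 1 - (k + 1) = s - k := by omega
      have h5 : (⟨s - k, hks⟩ : Fin (s + 1)) = (⟨k, hk⟩ : Fin (s + 1)).rev := by
        ext; simp only [Fin.val_rev]; omega
      have h6 := ih (by omega)
      rw [h3] at h6
      rw [h5] at h2
      have h7 := hWeq ⟨k, hk⟩
      rw [h4]
      omega
  -- orthogonals of the filtration
  have hOle : ∀ k k' : ℕ, k + k' ≤ s + 1 → P k' ≤ B.orthogonal (P k) := by
    intro k k' hkk'
    rw [hP k']
    apply stmt1_biSup_le
    intro j' hj'
    intro y hy
    rw [LinearMap.BilinForm.mem_orthogonal_iff]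
    intro x hxP
    have hker : P k ≤ LinearMap.ker (B.flip y) := by
      rw [hP k]
      apply stmt1_biSup_le
      intro j hj z hz
      simp only [LinearMap.mem_ker, LinearMap.flip_apply]
      refine horth j j' ?_ z hz y hy
      intro h0
      have he : e j = e j'.rev := by rw [hrev]; omega
      have hj2 : j = j'.rev := hdec.injective he
      have hv : (j : ℕ) = s - (j' : ℕ) := by rw [hj2]; simp [Fin.val_rev]
      omega
    exact hker hxP
  have hOeq : ∀ k : ℕ, k ≤ s + 1 → B.orthogonal (P k) = P (s + 1 - k) := by
    intro k hk
    have h1 := hOle k (s + 1 - k) (by omega)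
    have h2 := LinearMap.BilinForm.finrank_orthogonal hNd (P k)
    have h3 := hPpair k hk
    have h4 : finrank ℂ (P k) ≤ finrank ℂ U := (P k).finrank_le
    exact (Submodule.eq_of_le_of_finrank_le h1 (by omega)).symm
  -- the key dimension identity
  have hf : ∀ k : ℕ, k ≤ s + 1 → finrank ℂ ↥(A ⊓ P k) + finrank ℂ U
      = finrank ℂ A + finrank ℂ (P k) + finrank ℂ ↥(A ⊓ P (s + 1 - k)) := by
    intro k hk
    have i1 := stmt1_aux_ineq B hRefl hNd A (P k) hIsoA
    rw [hOeq k hk] at i1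
    have i2 := stmt1_aux_ineq B hRefl hNd A (P (s + 1 - k)) hIsoA
    rw [hOeq (s + 1 - k) (by omega)] at i2
    have h5 : s + 1 - (s + 1 - k) = k := by omega
    rw [h5] at i2
    have h3 := hPpair k hk
    omega
  -- conclusion
  intro i
  have hk : (i : ℕ) < s + 1 := i.isLt
  have hdI := hd i
  have hdR := hd i.rev
  rw [hMP i, hLP i] at hdI
  rw [hMP i.rev, hLP i.rev] at hdR
  have hrevval : ((i.rev : Fin (s + 1)) : ℕ) = s - (i : ℕ) := by simp [Fin.val_rev]
  rw [hrevval] at hdR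
  have e1 := hf ((i : ℕ) + 1) (by omega)
  have e2 := hf (s - (i : ℕ) + 1) (by omega)
  have h5 : s + 1 - ((i : ℕ) + 1) = s - (i : ℕ) := by omega
  have h6 : s + 1 - (s - (i : ℕ) + 1) = (i : ℕ) := by omega
  rw [h5] at e1; rw [h6] at e2
  have m1 : finrank ℂ ↥(A ⊓ P (i : ℕ)) ≤ finrank ℂ ↥(A ⊓ P ((i : ℕ) + 1)) :=
    Submodule.finrank_mono (inf_le_inf_left A (hPmono (Nat.le_succ _)))
  have m2 : finrank ℂ ↥(A ⊓ P (s - (i : ℕ))) ≤ finrank ℂ ↥(A ⊓ P (s - (i : ℕ) + 1)) :=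
    Submodule.finrank_mono (inf_le_inf_left A (hPmono (Nat.le_succ _)))
  have q1 := hPdimStep (i : ℕ) hk
  have hks : s - (i : ℕ) < s + 1 := by omega
  have q2 := hPdimStep (s - (i : ℕ)) hks
  have hqi : (⟨(i : ℕ), hk⟩ : Fin (s + 1)) = i := Fin.ext rfl
  rw [hqi] at q1
  have hq : (⟨s - (i : ℕ), hks⟩ : Fin (s + 1)) = i.rev := by
    ext; simp [Fin.val_rev]
  rw [hq] at q2
  have hwq := hWeq i
  have hpp := hPpair ((i : ℕ) + 1) (by omega)
  rw [h5] at hpp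
  omega
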